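/- Principle of correspondence at integer order: for n a positive natural number and f continuous on [a, x], R^n(f)(x) equals the n-fold iterated integral ∫ₐ^x ∫ₐ^{t₁} … ∫ₐ^{t_{n−1}} f(t_n) dt_n … dt₁ (Cauchy's formula for repeated integration). -/

import Mathlib

open MeasureTheory intervalIntegral Real Topology Filter
open scoped Nat

noncomputable def iterInt (a : ℝ) : ℕ → (ℝ → ℝ) → ℝ → ℝ
  | 0, f => f
  | n + 1, f => fun x => ∫ t in a..x, iterInt a n f t

open Set Finset in
lemma primitive_hasDerivWithinAt {a b : ℝ} (hab : a ≤ b) {g : ℝ → ℝ}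
    (hg : ContinuousOn g (Icc a b)) {x : ℝ} (hx : x ∈ Icc a b) :
    HasDerivWithinAt (fun u => ∫ t in a..u, g t) (g x) (Icc a b) x := by
  have hI : uIcc a b = Icc a b := uIcc_of_le hab
  haveI : Fact (x ∈ uIcc a b) := ⟨hI ▸ hx⟩
  have hint : IntervalIntegrable g volume a x := by
    apply ContinuousOn.intervalIntegrable
    apply hg.mono
    rw [uIcc_of_le hx.1]
    exact Icc_subset_Icc le_rfl hx.2
  have hmeas : StronglyMeasurableAtFilter g (𝓝[uIcc a b] x) := by
    rw [hI]; exact hg.stronglyMeasurableAtFilter_nhdsWithin measurableSet_Icc x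
  have hcw : ContinuousWithinAt g (uIcc a b) x := by rw [hI]; exact hg x hx
  have := intervalIntegral.integral_hasDerivWithinAt_right (s := Set.uIcc a b)
    (t := Set.uIcc a b) hint hmeas hcw
  rwa [hI] at this

open Set in
lemma primitive_continuousOn {a b : ℝ} (hab : a ≤ b) {g : ℝ → ℝ}
    (hg : ContinuousOn g (Icc a b)) :
    ContinuousOn (fun u => ∫ t in a..u, g t) (Icc a b) := fun x hx =>
  (primitive_hasDerivWithinAt hab hg hx).differentiableWithinAt.continuousWithinAt

open Set in
lemma iterInt_continuousOn {a b : ℝ} (hab : a ≤ b) {f : ℝ → ℝ}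
    (hf : ContinuousOn f (Icc a b)) :
    ∀ n, ContinuousOn (iterInt a n f) (Icc a b) := by
  intro n
  induction n with
  | zero => exact hf
  | succ m ih => exact primitive_continuousOn hab ih

open Set in
lemma hasDerivWithinAt_Ici_of_Icc {a b x : ℝ} (hx : x ∈ Ico a b) {F : ℝ → ℝ} {d : ℝ}
    (h : HasDerivWithinAt F d (Icc a b) x) : HasDerivWithinAt F d (Ici x) x := by
  apply h.mono_of_mem_nhdsWithin
  have hsub : Iio b ∩ Ici x ⊆ Icc a b := fun y hy => ⟨hx.1.trans hy.2, le_of_lt hy.1⟩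
  exact mem_nhdsWithin.mpr ⟨Iio b, isOpen_Iio, hx.2, hsub⟩

open Set Finset in
lemma cauchy_key {a b : ℝ} (hab : a ≤ b) {f : ℝ → ℝ} (hf : ContinuousOn f (Icc a b)) :
    ∀ n : ℕ, ∀ x ∈ Icc a b,
      (∫ y in a..x, (x - y) ^ n * f y) = (n ! : ℝ) * iterInt a (n + 1) f x := by
  -- auxiliary primitives
  set G : ℕ → ℝ → ℝ := fun j x => ∫ t in a..x, (-t) ^ j * f t with hG
  have hgc : ∀ j : ℕ, ContinuousOn (fun t : ℝ => (-t) ^ j * f t) (Icc a b) :=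
    fun j => (Continuous.continuousOn (by continuity)).mul hf
  have hGcont : ∀ j, ContinuousOn (G j) (Icc a b) := fun j =>
    primitive_continuousOn hab (hgc j)
  have hGderiv : ∀ j, ∀ x ∈ Icc a b,
      HasDerivWithinAt (G j) ((-x) ^ j * f x) (Icc a b) x := fun j x hx =>
    primitive_hasDerivWithinAt hab (hgc j) hx
  -- binomial representation
  set S : ℕ → ℝ → ℝ := fun m x =>
    ∑ k ∈ range (m + 1), (m.choose k : ℝ) * (x ^ k * G (m - k) x) with hS
  have hrep : ∀ m : ℕ, ∀ x ∈ Icc a b,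
      (∫ y in a..x, (x - y) ^ m * f y) = S m x := by
    intro m x hx
    have hsubx : Icc a x ⊆ Icc a b := Icc_subset_Icc le_rfl hx.2
    have hint : ∀ k ∈ range (m + 1), IntervalIntegrable
        (fun y => (m.choose k : ℝ) * (x ^ k * ((-y) ^ (m - k) * f y))) volume a x := by
      intro k _
      apply ContinuousOn.intervalIntegrable
      rw [uIcc_of_le hx.1]
      exact continuousOn_const.mul (continuousOn_const.mul ((hgc (m - k)).mono hsubx))
    have heq : ∀ y : ℝ, (x - y) ^ m * f y
        = ∑ k ∈ range (m + 1), (m.choose k : ℝ) * (x ^ k * ((-y) ^ (m - k) * f y)) := by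
      intro y
      rw [sub_eq_add_neg, add_pow, Finset.sum_mul]
      exact Finset.sum_congr rfl fun k _ => by ring
    calc (∫ y in a..x, (x - y) ^ m * f y)
        = ∫ y in a..x, ∑ k ∈ range (m + 1),
            (m.choose k : ℝ) * (x ^ k * ((-y) ^ (m - k) * f y)) := by
          simp_rw [heq]
      _ = ∑ k ∈ range (m + 1), ∫ y in a..x,
            (m.choose k : ℝ) * (x ^ k * ((-y) ^ (m - k) * f y)) :=
          intervalIntegral.integral_finset_sum hint
      _ = S m x := by
          refine Finset.sum_congr rfl fun k _ => ?_
          rw [intervalIntegral.integral_const_mul, intervalIntegral.integral_const_mul]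
  have hScont : ∀ m, ContinuousOn (S m) (Icc a b) := by
    intro m
    apply continuousOn_finset_sum
    intro k _
    exact continuousOn_const.mul ((continuousOn_pow k).mul (hGcont (m - k)))
  have hSderiv : ∀ m : ℕ, ∀ x ∈ Icc a b, HasDerivWithinAt (S m)
      (∑ k ∈ range (m + 1), (m.choose k : ℝ) *
        ((k : ℝ) * x ^ (k - 1) * G (m - k) x + x ^ k * ((-x) ^ (m - k) * f x)))
      (Icc a b) x := by
    intro m x hx
    apply HasDerivWithinAt.fun_sum
    intro k _
    exact (((hasDerivAt_pow k x).hasDerivWithinAt.mul (hGderiv (m - k) x hx))).const_mul _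
  -- the main induction
  intro n
  induction n with
  | zero =>
    intro x hx
    have : iterInt a 1 f x = ∫ t in a..x, f t := by
      show (∫ t in a..x, iterInt a 0 f t) = _
      rfl
    simp [this]
  | succ m ih =>
    -- derivative value simplification
    have hderval : ∀ x ∈ Icc a b,
        (∑ k ∈ range (m + 2), ((m + 1).choose k : ℝ) *
          ((k : ℝ) * x ^ (k - 1) * G (m + 1 - k) x + x ^ k * ((-x) ^ (m + 1 - k) * f x)))
        = (m + 1 : ℝ) * S m x := by
      intro x hx
      rw [Finset.sum_congr rfl (fun k _ => mul_add (((m + 1).choose k : ℝ)) _ _),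
        Finset.sum_add_distrib]
      have h2 : (∑ k ∈ range (m + 2), ((m + 1).choose k : ℝ) *
          (x ^ k * ((-x) ^ (m + 1 - k) * f x))) = 0 := by
        have hb : (∑ k ∈ range (m + 2), x ^ k * (-x) ^ (m + 1 - k) * ((m + 1).choose k : ℝ))
            = (x + -x) ^ (m + 1) := (add_pow x (-x) (m + 1)).symm
        calc (∑ k ∈ range (m + 2), ((m + 1).choose k : ℝ) * (x ^ k * ((-x) ^ (m + 1 - k) * f x)))
            = (∑ k ∈ range (m + 2), x ^ k * (-x) ^ (m + 1 - k) * ((m + 1).choose k : ℝ)) * f x := by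
              rw [Finset.sum_mul]; exact Finset.sum_congr rfl fun k _ => by ring
          _ = 0 := by rw [hb]; simp
      rw [h2, add_zero]
      rw [Finset.sum_range_succ']
      simp only [Nat.cast_zero, zero_mul, mul_zero, add_zero]
      rw [hS, Finset.mul_sum]
      refine Finset.sum_congr rfl fun k _ => ?_
      have hc : ((m + 1).choose (k + 1) : ℝ) * ((k : ℝ) + 1) = ((m : ℝ) + 1) * (m.choose k : ℝ) := by
        exact_mod_cast (Nat.add_one_mul_choose_eq m k).symm
      have hsub : m + 1 - (k + 1) = m - k := by omega
      have h11 : k + 1 - 1 = k := by omega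
      rw [hsub, h11, Nat.cast_add, Nat.cast_one]
      calc ((m + 1).choose (k + 1) : ℝ) * (((k : ℝ) + 1) * x ^ k * G (m - k) x)
          = (((m + 1).choose (k + 1) : ℝ) * ((k : ℝ) + 1)) * (x ^ k * G (m - k) x) := by ring
        _ = ((m : ℝ) + 1) * ((m.choose k : ℝ) * (x ^ k * G (m - k) x)) := by rw [hc]; ring
    -- apply uniqueness of primitives
    have key : ∀ y ∈ Icc a b, S (m + 1) y = ((m + 1)! : ℝ) * iterInt a (m + 2) f y := by
      apply eq_of_has_deriv_right_eq
        (f' := fun x => ((m + 1)! : ℝ) * iterInt a (m + 1) f x)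
      · intro x hx
        have hx' : x ∈ Icc a b := ⟨hx.1, hx.2.le⟩
        have h1 := hSderiv (m + 1) x hx'
        rw [hderval x hx'] at h1
        have h2 : (m + 1 : ℝ) * S m x = ((m + 1)! : ℝ) * iterInt a (m + 1) f x := by
          rw [← hrep m x hx', ih x hx']
          push_cast [Nat.factorial_succ]
          ring
        rw [h2] at h1
        exact hasDerivWithinAt_Ici_of_Icc hx h1
      · intro x hx
        have hx' : x ∈ Icc a b := ⟨hx.1, hx.2.le⟩
        have h1 : HasDerivWithinAt (fun u => ∫ t in a..u, iterInt a (m + 1) f t)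
            (iterInt a (m + 1) f x) (Icc a b) x :=
          primitive_hasDerivWithinAt hab (iterInt_continuousOn hab hf (m + 1)) hx'
        have h2 := h1.const_mul (((m + 1)! : ℝ))
        exact hasDerivWithinAt_Ici_of_Icc hx h2
      · exact hScont (m + 1)
      · exact continuousOn_const.mul (iterInt_continuousOn hab hf (m + 2))
      · rw [← hrep (m + 1) a ⟨le_rfl, hab⟩]
        show (∫ y in a..a, (a - y) ^ (m + 1) * f y) = _ * ∫ t in a..a, iterInt a (m + 1) f t
        simp
    intro x hx
    rw [hrep (m + 1) x hx, key x hx]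

theorem cauchy_repeated_integration (n : ℕ) (hn : 0 < n) (a x : ℝ) (hax : a ≤ x)
    (f : ℝ → ℝ) (hf : ContinuousOn f (Set.Icc a x)) :
    (1 / Real.Gamma n) * ∫ y in a..x, (x - y) ^ ((n : ℝ) - 1) * f y = iterInt a n f x := by
  obtain ⟨m, rfl⟩ : ∃ m, n = m + 1 := ⟨n - 1, by omega⟩
  have hexp : ∀ y : ℝ, (x - y) ^ (((m + 1 : ℕ) : ℝ) - 1) = (x - y) ^ (m : ℕ) := by
    intro y
    have : (((m + 1 : ℕ) : ℝ) - 1) = (m : ℝ) := by push_cast; ring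
    rw [this, Real.rpow_natCast]
  have hGamma : Real.Gamma ((m + 1 : ℕ) : ℝ) = (m ! : ℝ) := by
    push_cast
    exact Real.Gamma_nat_eq_factorial m
  simp_rw [hexp, hGamma]
  rw [cauchy_key hax hf m x ⟨hax, le_rfl⟩]
  have : (m ! : ℝ) ≠ 0 := Nat.cast_ne_zero.mpr (Nat.factorial_ne_zero m)
  field_simp
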